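/- Let g(t) = exp(−t^{−β}) for t > 0 and g(t) = 0 for t ≤ 0, with β > 0. Then there exists θ ∈ (0,1) such that for all k ≥ 1 and all t, |g^{(k)}(t)| ≤ k!·(2k/(e·β·θ^β))^{k/β}. -/

import Mathlib

open Real Filter

/-- The flat function g(t) = exp(−t^{−β}) for t > 0 and g(t) = 0 for t ≤ 0. -/
noncomputable def flatFn (β : ℝ) (t : ℝ) : ℝ :=
  if 0 < t then Real.exp (-(t ^ (-β))) else 0

noncomputable def Fc (β : ℝ) : ℂ → ℂ := fun z => Complex.exp (-(z ^ (-β : ℂ)))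

noncomputable def gj (β : ℝ) (j : ℕ) : ℝ → ℝ :=
  fun t => if 0 < t then (iteratedDeriv j (Fc β) (t : ℂ)).re else 0

lemma analyticOnNhd_iteratedDeriv_Fc (β : ℝ) (j : ℕ) :
    AnalyticOnNhd ℂ (iteratedDeriv j (Fc β)) {z : ℂ | 0 < z.re} := by
  induction j with
  | zero =>
    simp only [iteratedDeriv_zero]
    apply DifferentiableOn.analyticOnNhd _ (isOpen_lt continuous_const Complex.continuous_re)
    intro z hz
    refine DifferentiableAt.differentiableWithinAt ?_
    exact (Complex.differentiable_exp.differentiableAt).comp z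
      ((differentiableAt_id.cpow (differentiableAt_const _) (Or.inl hz)).neg)
  | succ n ih =>
    rw [iteratedDeriv_succ]
    exact ih.deriv

lemma hasDerivAt_iteratedDeriv_Fc (β : ℝ) (j : ℕ) {z : ℂ} (hz : 0 < z.re) :
    HasDerivAt (iteratedDeriv j (Fc β)) (iteratedDeriv (j+1) (Fc β) z) z := by
  rw [iteratedDeriv_succ]
  exact ((analyticOnNhd_iteratedDeriv_Fc β j z hz).differentiableAt).hasDerivAt

/-- Cauchy estimate for iterated derivatives. -/
lemma cauchy_iteratedDeriv_bound {f : ℂ → ℂ} {c : ℂ} {R C : ℝ} (hR : 0 < R)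
    (hd : DiffContOnCl ℂ f (Metric.ball c R))
    (hC : ∀ z ∈ Metric.closedBall c R, ‖f z‖ ≤ C) (n : ℕ) :
    ‖iteratedDeriv n f c‖ ≤ n.factorial * C / R ^ n := by
  have hC0 : 0 ≤ C := le_trans (norm_nonneg _) (hC c (Metric.mem_closedBall_self hR.le))
  lift R to NNReal using hR.le with R'
  have hR' : 0 < R' := by exact_mod_cast hR
  have h := hd.hasFPowerSeriesOnBall hR'
  have hcoef : ‖cauchyPowerSeries f c R' n‖ ≤ C / (R' : ℝ) ^ n := by
    refine le_trans (norm_cauchyPowerSeries_le f c R' n) ?_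
    have hint : (∫ θ : ℝ in (0)..2 * π, ‖f (circleMap c R' θ)‖) ≤ (2 * π) * C := by
      have : (∫ θ : ℝ in (0)..2 * π, ‖f (circleMap c R' θ)‖) ≤
          ∫ _ : ℝ in (0)..2 * π, C := by
        apply intervalIntegral.integral_mono_on Real.two_pi_pos.le
        · apply ContinuousOn.intervalIntegrable
          apply ContinuousOn.norm
          apply hd.continuousOn.comp (continuous_circleMap c R').continuousOn
          intro θ _
          rw [closure_ball c hR.ne']
          exact circleMap_mem_closedBall c hR.le θ
        · exact intervalIntegrable_const
        · intro θ _
          exact hC _ (circleMap_mem_closedBall c hR.le θ)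
      simpa [mul_comm] using this
    rw [div_eq_mul_inv, ← inv_pow]
    have h2pi : (0:ℝ) < (2 * π)⁻¹ := by positivity
    calc (2 * π)⁻¹ * (∫ θ : ℝ in (0)..2 * π, ‖f (circleMap c R' θ)‖) * |(R':ℝ)|⁻¹ ^ n
        ≤ (2 * π)⁻¹ * ((2 * π) * C) * |(R':ℝ)|⁻¹ ^ n := by
          gcongr
      _ = C * ((R':ℝ)⁻¹) ^ n := by
          rw [abs_of_nonneg (R'.coe_nonneg)]
          field_simp
  -- now relate iteratedDeriv to the power series coefficient
  have key := h.factorial_smul (1 : ℂ) n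
  have : iteratedDeriv n f c = n.factorial • (cauchyPowerSeries f c R' n fun _ => (1:ℂ)) := by
    rw [key, iteratedDeriv_eq_iteratedFDeriv]
  rw [this]
  rw [nsmul_eq_mul]
  rw [norm_mul]
  have hb : ‖(cauchyPowerSeries f c R' n) fun _ => (1:ℂ)‖ ≤ C / (R':ℝ) ^ n := by
    refine le_trans ((cauchyPowerSeries f c R' n).le_opNorm _) ?_
    simpa using hcoef
  calc ‖(n.factorial : ℂ)‖ * ‖(cauchyPowerSeries f c R' n) fun _ => (1:ℂ)‖
      ≤ (n.factorial : ℝ) * (C / (R':ℝ) ^ n) := by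
        rw [Complex.norm_natCast]
        exact mul_le_mul_of_nonneg_left hb (by positivity)
    _ = n.factorial * C / (R':ℝ) ^ n := by ring

lemma Fc_norm_bound {β θ t : ℝ} (hβ : 0 < β) (hθ0 : 0 < θ) (hθ1 : θ ≤ 1/2)
    (hθβ : β * θ ≤ 1/5) (ht : 0 < t) {z : ℂ}
    (hz : z ∈ Metric.closedBall (t : ℂ) (θ * t)) :
    ‖Fc β z‖ ≤ Real.exp (-(t ^ (-β) / 2)) := by
  have hzt : ‖z - (t:ℂ)‖ ≤ θ * t := by
    simpa [Metric.mem_closedBall, dist_eq_norm] using hz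
  have hre : t / 2 ≤ z.re := by
    have h1 : |(z - (t:ℂ)).re| ≤ θ * t := le_trans (Complex.abs_re_le_norm _) hzt
    have h2 : (z - (t:ℂ)).re = z.re - t := by simp
    have h3 : θ * t ≤ t / 2 := by nlinarith
    rw [h2] at h1
    have := abs_le.1 h1
    linarith [this.1]
  have hre0 : 0 < z.re := lt_of_lt_of_le (by linarith) hre
  have hz0 : z ≠ 0 := fun h => by simp [h] at hre0
  have him : |z.im| ≤ θ * t := by
    have h1 : |(z - (t:ℂ)).im| ≤ θ * t := le_trans (Complex.abs_im_le_norm _) hzt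
    simpa using h1
  have hA0 : 0 < ‖z‖ := norm_pos_iff.mpr hz0
  have hAre : z.re ≤ ‖z‖ := Complex.re_le_norm z
  have hAub : ‖z‖ ≤ (1 + θ) * t := by
    have : z = (t:ℂ) + (z - t) := by ring
    calc ‖z‖ = ‖(t:ℂ) + (z - t)‖ := by rw [← this]
      _ ≤ ‖(t:ℂ)‖ + ‖z - t‖ := norm_add_le _ _
      _ ≤ t + θ * t := by
          rw [Complex.norm_real, Real.norm_eq_abs, abs_of_pos ht]
          gcongr
      _ = (1 + θ) * t := by ring
  -- compute the real part of z ^ (-β)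
  have hcpow : (z ^ (-β : ℂ)).re = ‖z‖ ^ (-β) * Real.cos (β * Complex.arg z) := by
    rw [Complex.cpow_def_of_ne_zero hz0]
    rw [Complex.exp_re]
    have hre_ : (Complex.log z * (-β : ℂ)).re = Real.log ‖z‖ * (-β) := by
      simp [Complex.mul_re, Complex.log_re]
    have him_ : (Complex.log z * (-β : ℂ)).im = Complex.arg z * (-β) := by
      simp [Complex.mul_im, Complex.log_im]
    rw [hre_, him_]
    rw [Real.rpow_def_of_pos hA0]
    rw [show Complex.arg z * (-β) = -(β * Complex.arg z) by ring, Real.cos_neg]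
  -- bound |arg z| ≤ π * θ
  have harg : |Complex.arg z| ≤ π * θ := by
    have hargpi2 : |Complex.arg z| ≤ π / 2 := Complex.abs_arg_le_pi_div_two_iff.2 hre0.le
    have hsin : Real.sin |Complex.arg z| = |z.im| / ‖z‖ := by
      rcases le_or_gt 0 (Complex.arg z) with h | h
      · rw [abs_of_nonneg h, Complex.sin_arg, abs_of_nonneg (Complex.arg_nonneg_iff.1 h)]
      · rw [abs_of_neg h, Real.sin_neg, Complex.sin_arg,
          abs_of_neg (Complex.arg_neg_iff.1 h), neg_div]
    have hmul := Real.mul_le_sin (abs_nonneg (Complex.arg z)) hargpi2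
    rw [hsin] at hmul
    have hdiv : |z.im| / ‖z‖ ≤ 2 * θ := by
      rw [div_le_iff₀ hA0]
      nlinarith [le_trans hre hAre]
    have hπ : (0:ℝ) < π := Real.pi_pos
    have : 2 / π * |Complex.arg z| ≤ 2 * θ := le_trans hmul hdiv
    calc |Complex.arg z| = π / 2 * (2 / π * |Complex.arg z|) := by field_simp
      _ ≤ π / 2 * (2 * θ) := by gcongr
      _ = π * θ := by ring
  -- cosine lower bound
  have hcos : (5:ℝ)/8 ≤ Real.cos (β * Complex.arg z) := by
    have h1 : |β * Complex.arg z| ≤ π * (β * θ) := by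
      rw [abs_mul, abs_of_pos hβ]
      calc β * |Complex.arg z| ≤ β * (π * θ) := by gcongr
        _ = π * (β * θ) := by ring
    have hπ4 : π ≤ 3.2 := by linarith [Real.pi_lt_d2]
    have h2 : |β * Complex.arg z| ≤ 0.64 := by
      calc |β * Complex.arg z| ≤ π * (β * θ) := h1
        _ ≤ 3.2 * (1/5) := by
            apply mul_le_mul hπ4 hθβ (by positivity) (by norm_num)
        _ = 0.64 := by norm_num
    have h3 := Real.one_sub_sq_div_two_le_cos (x := β * Complex.arg z)
    have h4 : (β * Complex.arg z) ^ 2 ≤ 0.64 ^ 2 := by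
      rw [← sq_abs]
      exact pow_le_pow_left₀ (abs_nonneg _) h2 2
    nlinarith
  -- rpow lower bound
  have hrpow : (4:ℝ)/5 * t ^ (-β) ≤ ‖z‖ ^ (-β) := by
    have h1 : ((1 + θ) * t) ^ (-β) ≤ ‖z‖ ^ (-β) :=
      Real.rpow_le_rpow_of_nonpos hA0 hAub (neg_nonpos.2 hβ.le)
    refine le_trans ?_ h1
    rw [Real.mul_rpow (by positivity) ht.le]
    have h2 : (1 + θ) ^ β ≤ 5/4 := by
      have h3 : (1 + θ) ^ β ≤ Real.exp θ ^ β :=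
        Real.rpow_le_rpow (by positivity) (by linarith [Real.add_one_le_exp θ]) hβ.le
      have h4 : Real.exp θ ^ β = Real.exp (θ * β) := (Real.exp_mul θ β).symm
      have h5 : Real.exp (θ * β) ≤ Real.exp (1/5) :=
        Real.exp_le_exp.2 (by nlinarith)
      have h6 : Real.exp (1/5) ≤ 5/4 := by
        have h7 := Real.add_one_le_exp (-(1/5) : ℝ)
        have h8 : (4:ℝ)/5 ≤ Real.exp (-(1/5)) := by linarith
        rw [Real.exp_neg] at h8
        have h9 : (0:ℝ) < Real.exp (1/5) := Real.exp_pos _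
        have := (le_inv_comm₀ (by norm_num : (0:ℝ) < 4/5) h9).1 h8
        linarith
      linarith
    have h10 : (4:ℝ)/5 ≤ (1 + θ) ^ (-β) := by
      rw [Real.rpow_neg (by positivity)]
      have h11 : (0:ℝ) < (1 + θ) ^ β := Real.rpow_pos_of_pos (by positivity) β
      rw [le_inv_comm₀ (by norm_num) h11]
      calc (1 + θ) ^ β ≤ 5/4 := h2
        _ = (4/5 : ℝ)⁻¹ := by norm_num
    have ht0 : (0:ℝ) < t ^ (-β) := Real.rpow_pos_of_pos ht _
    calc (4:ℝ)/5 * t ^ (-β) ≤ (1 + θ) ^ (-β) * t ^ (-β) := by gcongr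
      _ = (1 + θ) ^ (-β) * t ^ (-β) := rfl
  -- finish
  have hre_ge : t ^ (-β) / 2 ≤ (z ^ (-β : ℂ)).re := by
    rw [hcpow]
    have h1 : (4:ℝ)/5 * t ^ (-β) * (5/8) ≤
        ‖z‖ ^ (-β) * Real.cos (β * Complex.arg z) :=
      mul_le_mul hrpow hcos (by norm_num) (Real.rpow_nonneg hA0.le _)
    calc t ^ (-β) / 2 = 4/5 * t ^ (-β) * (5/8) := by ring
      _ ≤ _ := h1
  show ‖Complex.exp (-(z ^ (-β : ℂ)))‖ ≤ _
  rw [Complex.norm_exp]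
  apply Real.exp_le_exp.2
  rw [Complex.neg_re]
  linarith

section
variable {β θ : ℝ} (hβ : 0 < β) (hθ0 : 0 < θ) (hθ1 : θ ≤ 1/2) (hθβ : β * θ ≤ 1/5)
include hβ hθ0 hθ1 hθβ

lemma iteratedDeriv_Fc_bound (j : ℕ) {t : ℝ} (ht : 0 < t) :
    ‖iteratedDeriv j (Fc β) (t : ℂ)‖ ≤
      j.factorial * Real.exp (-(t ^ (-β) / 2)) / (θ * t) ^ j := by
  have hR : 0 < θ * t := by positivity
  have hball : Metric.closedBall (t : ℂ) (θ * t) ⊆ {z : ℂ | 0 < z.re} := by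
    intro z hz
    have hzt : ‖z - (t:ℂ)‖ ≤ θ * t := by
      simpa [Metric.mem_closedBall, dist_eq_norm] using hz
    have h1 : |(z - (t:ℂ)).re| ≤ θ * t := le_trans (Complex.abs_re_le_norm _) hzt
    have h2 : (z - (t:ℂ)).re = z.re - t := by simp
    rw [h2] at h1
    have := (abs_le.1 h1).1
    show 0 < z.re
    nlinarith
  have hd : DiffContOnCl ℂ (Fc β) (Metric.ball (t : ℂ) (θ * t)) := by
    apply DifferentiableOn.diffContOnCl
    rw [closure_ball _ hR.ne']
    intro z hz
    exact ((analyticOnNhd_iteratedDeriv_Fc β 0 z (hball hz)).differentiableAt.congr_of_eventuallyEq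
      (by simp [iteratedDeriv_zero])).differentiableWithinAt
  exact cauchy_iteratedDeriv_bound hR hd
    (fun z hz => Fc_norm_bound hβ hθ0 hθ1 hθβ ht hz) j

lemma hasDerivAt_gj (j : ℕ) (t : ℝ) :
    HasDerivAt (gj β j) (gj β (j+1) t) t := by
  rcases lt_trichotomy t 0 with ht | rfl | ht
  · -- negative: locally zero
    have hev : gj β j =ᶠ[nhds t] fun _ => (0:ℝ) := by
      filter_upwards [Iio_mem_nhds ht] with x hx
      simp only [gj, if_neg (not_lt.2 (Set.mem_Iio.1 hx).le)]
    have h0 : gj β (j+1) t = 0 := by simp [gj, if_neg (not_lt.2 ht.le)]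
    rw [h0]
    exact (hasDerivAt_const t (0:ℝ)).congr_of_eventuallyEq hev
  · -- zero: slope squeeze
    have h0 : gj β (j+1) (0:ℝ) = 0 := by simp [gj]
    rw [h0]
    rw [hasDerivAt_iff_tendsto_slope]
    set m : ℕ := j + 1 with hm
    set C : ℝ := j.factorial / θ ^ j with hC
    set φ : ℝ → ℝ := fun h =>
      if 0 < h then C * ((h ^ (-β)) ^ ((m : ℝ)/β) * Real.exp (-(1/2) * h ^ (-β))) else 0
      with hφ
    apply squeeze_zero_norm' (a := φ)
    · filter_upwards [self_mem_nhdsWithin] with h (hh : h ≠ 0)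
      rcases lt_or_gt_of_ne hh with hneg | hpos
      · have : gj β j h = 0 := by simp [gj, if_neg (not_lt.2 hneg.le)]
        simp [slope, this, φ, if_neg (not_lt.2 hneg.le), gj]
      · have hb := iteratedDeriv_Fc_bound hβ hθ0 hθ1 hθβ j hpos
        have hgj : |gj β j h| ≤ j.factorial * Real.exp (-(h ^ (-β) / 2)) / (θ * h) ^ j := by
          rw [gj, if_pos hpos]
          exact le_trans (Complex.abs_re_le_norm _) hb
        have hslope : slope (gj β j) 0 h = gj β j h / h := by
          rw [slope_def_field]
          simp [gj]
        rw [hslope]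
        have hφh : φ h = C * ((h ^ (-β)) ^ ((m : ℝ)/β) * Real.exp (-(1/2) * h ^ (-β))) := by
          simp only [hφ, if_pos hpos]
        rw [hφh]
        have hrw : (h ^ (-β)) ^ ((m : ℝ)/β) = (h ^ m)⁻¹ := by
          rw [← Real.rpow_natCast h m, ← Real.rpow_neg hpos.le, ← Real.rpow_mul hpos.le]
          congr 1
          field_simp
        rw [hrw]
        have hexp : Real.exp (-(1/2) * h ^ (-β)) = Real.exp (-(h ^ (-β) / 2)) := by
          congr 1; ring
        rw [hexp]
        rw [Real.norm_eq_abs, abs_div, abs_of_pos hpos]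
        rw [div_le_iff₀ hpos]
        refine le_trans hgj (le_of_eq ?_)
        rw [hC, mul_pow, hm]
        have hθj : (0:ℝ) < θ ^ j := by positivity
        have hhj : (0:ℝ) < h ^ j := by positivity
        rw [pow_succ]
        field_simp
    · -- tendsto of the bound
      have hsplit : nhdsWithin (0:ℝ) {(0:ℝ)}ᶜ = nhdsWithin 0 (Set.Iio 0) ⊔ nhdsWithin 0 (Set.Ioi 0) :=
        (nhdsLT_sup_nhdsGT (0:ℝ)).symm
      rw [hsplit, tendsto_sup]
      constructor
      · apply Tendsto.congr' (f₁ := fun _ => (0:ℝ))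
        · filter_upwards [self_mem_nhdsWithin] with h (hh : h ∈ Set.Iio 0)
          simp only [hφ, if_neg (not_lt.2 (Set.mem_Iio.1 hh).le)]
        · exact tendsto_const_nhds
      · have h1 : Tendsto (fun h : ℝ => h ^ (-β)) (nhdsWithin 0 (Set.Ioi 0)) atTop := by
          apply Tendsto.congr' (f₁ := fun h : ℝ => (h⁻¹) ^ β)
          · filter_upwards [self_mem_nhdsWithin] with h (hh : h ∈ Set.Ioi 0)
            rw [← Real.rpow_neg_one h, ← Real.rpow_mul (Set.mem_Ioi.1 hh).le]
            norm_num
          · exact (tendsto_rpow_atTop hβ).comp tendsto_inv_nhdsGT_zero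
        have h2 : Tendsto (fun u : ℝ => u ^ ((m : ℝ)/β) * Real.exp (-(1/2) * u)) atTop (nhds 0) :=
          tendsto_rpow_mul_exp_neg_mul_atTop_nhds_zero _ _ (by norm_num)
        have h3 := (h2.comp h1).const_mul C
        rw [mul_zero] at h3
        apply Tendsto.congr' _ h3
        filter_upwards [self_mem_nhdsWithin] with h (hh : h ∈ Set.Ioi 0)
        simp only [hφ, Function.comp, if_pos (Set.mem_Ioi.1 hh)]
  · -- positive: complex transfer
    have he := hasDerivAt_iteratedDeriv_Fc β j (z := (t:ℂ)) (by simpa using ht)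
    have hre := he.real_of_complex
    have hev : gj β j =ᶠ[nhds t] fun x : ℝ => (iteratedDeriv j (Fc β) (x:ℂ)).re := by
      filter_upwards [Ioi_mem_nhds ht] with x hx
      simp only [gj, if_pos (Set.mem_Ioi.1 hx)]
    have h1 : gj β (j+1) t = (iteratedDeriv (j+1) (Fc β) (t:ℂ)).re := by
      simp only [gj, if_pos ht]
    rw [h1]
    exact hre.congr_of_eventuallyEq hev
end

section
variable {β θ : ℝ} (hβ : 0 < β) (hθ0 : 0 < θ) (hθ1 : θ ≤ 1/2) (hθβ : β * θ ≤ 1/5)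
include hβ hθ0 hθ1 hθβ

omit hβ hθ0 hθ1 hθβ in
lemma flatFn_eq_gj0 : flatFn β = gj β 0 := by
  funext t
  simp only [flatFn, gj, iteratedDeriv_zero]
  rcases lt_or_ge 0 t with ht | ht
  · rw [if_pos ht, if_pos ht]
    have h1 : ((t:ℂ) ^ (-β : ℂ)) = ((t ^ (-β) : ℝ) : ℂ) := by
      rw [show (-β : ℂ) = ((-β : ℝ) : ℂ) by push_cast; ring]
      exact (Complex.ofReal_cpow ht.le (-β)).symm
    show Real.exp (-(t ^ (-β))) = (Complex.exp (-((t:ℂ) ^ (-β : ℂ)))).re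
    rw [h1, ← Complex.ofReal_neg, ← Complex.ofReal_exp, Complex.ofReal_re]
  · rw [if_neg (not_lt.2 ht), if_neg (not_lt.2 ht)]

lemma iteratedDeriv_flatFn_eq (k : ℕ) : iteratedDeriv k (flatFn β) = gj β k := by
  induction k with
  | zero => rw [iteratedDeriv_zero]; exact flatFn_eq_gj0
  | succ n ih =>
    rw [iteratedDeriv_succ, ih]
    funext t
    exact (hasDerivAt_gj hβ hθ0 hθ1 hθβ n t).deriv

end

-- the optimization lemma
lemma opt_bound {β θ : ℝ} (hβ : 0 < β) (hθ0 : 0 < θ) {k : ℕ} (hk : 1 ≤ k) {t : ℝ} (ht : 0 < t) :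
    Real.exp (-(t ^ (-β) / 2)) / (θ * t) ^ k ≤
      (2 * k / (Real.exp 1 * β * θ ^ β)) ^ ((k : ℝ) / β) := by
  set a : ℝ := (k : ℝ) / β with ha
  have ha0 : 0 < a := by positivity
  set u : ℝ := t ^ (-β) with hu
  have hu0 : 0 < u := Real.rpow_pos_of_pos ht _
  -- rewrite LHS
  have hL : Real.exp (-(u / 2)) / (θ * t) ^ k = (θ ^ (-β)) ^ a * (u ^ a * Real.exp (-(u/2))) := by
    have h1 : ((θ * t) ^ k : ℝ) = (θ * t) ^ (k : ℝ) := (Real.rpow_natCast _ k).symm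
    have h2 : (θ * t) ^ ((k:ℝ)) = θ ^ (k:ℝ) * t ^ (k:ℝ) :=
      Real.mul_rpow hθ0.le ht.le
    have h3 : u ^ a = t ^ (-(k:ℝ)) := by
      rw [hu, ← Real.rpow_mul ht.le, ha]
      congr 1
      field_simp
    have h4 : (θ ^ (-β)) ^ a = θ ^ (-(k:ℝ)) := by
      rw [← Real.rpow_mul hθ0.le, ha]
      congr 1
      field_simp
    rw [h1, h2, h3, h4]
    rw [Real.rpow_neg hθ0.le, Real.rpow_neg ht.le]
    field_simp
  have claim : u ^ a * Real.exp (-(u/2)) ≤ (2 * a / Real.exp 1) ^ a := by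
    have h2a : (0:ℝ) < 2 * a := by linarith
    have hlog := Real.log_le_sub_one_of_pos (show (0:ℝ) < u / (2*a) by positivity)
    rw [Real.log_div hu0.ne' h2a.ne'] at hlog
    have hmul : a * (Real.log u - Real.log (2*a)) ≤ a * (u / (2*a) - 1) :=
      mul_le_mul_of_nonneg_left hlog ha0.le
    have hcancel : a * (u / (2*a)) = u / 2 := by field_simp
    have hkey : Real.log u * a - u/2 ≤ (Real.log (2*a) - 1) * a := by nlinarith
    calc u ^ a * Real.exp (-(u/2))
        = Real.exp (Real.log u * a - u/2) := by
          rw [Real.rpow_def_of_pos hu0, ← Real.exp_add]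
          congr 1
      _ ≤ Real.exp ((Real.log (2*a) - 1) * a) := Real.exp_le_exp.2 hkey
      _ = (2 * a / Real.exp 1) ^ a := by
          rw [Real.rpow_def_of_pos (by positivity)]
          congr 1
          rw [Real.log_div h2a.ne' (Real.exp_pos 1).ne', Real.log_exp]
  calc Real.exp (-(t ^ (-β) / 2)) / (θ * t) ^ k
      = (θ ^ (-β)) ^ a * (u ^ a * Real.exp (-(u/2))) := hL
    _ ≤ (θ ^ (-β)) ^ a * (2 * a / Real.exp 1) ^ a := by
        gcongr
    _ = (θ ^ (-β) * (2 * a / Real.exp 1)) ^ a := (Real.mul_rpow (Real.rpow_nonneg hθ0.le _)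
        (by positivity)).symm
    _ = (2 * k / (Real.exp 1 * β * θ ^ β)) ^ ((k : ℝ) / β) := by
        congr 1
        rw [Real.rpow_neg hθ0.le, ha]
        field_simp

/-- Huang's derivative bound |g^{(k)}(t)| ≤ k!·(2k/(eβθ^β))^{k/β}. -/
theorem flat_function_derivative_bound (β : ℝ) (hβ : 0 < β) :
    ∃ θ : ℝ, θ ∈ Set.Ioo (0:ℝ) 1 ∧ ∀ k : ℕ, 1 ≤ k → ∀ t : ℝ,
      |iteratedDeriv k (flatFn β) t| ≤
        (Nat.factorial k : ℝ) *
          ((2 * k / (Real.exp 1 * β * θ ^ β)) ^ ((k : ℝ) / β)) := by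
  set θ : ℝ := min (1/2) (1/(5*β)) with hθdef
  have hθ0 : 0 < θ := lt_min (by norm_num) (by positivity)
  have hθ1 : θ ≤ 1/2 := min_le_left _ _
  have hθβ : β * θ ≤ 1/5 := by
    have h1 : θ ≤ 1/(5*β) := min_le_right _ _
    have h2 : β * θ ≤ β * (1/(5*β)) := mul_le_mul_of_nonneg_left h1 hβ.le
    have h3 : β * (1/(5*β)) = 1/5 := by field_simp
    linarith
  refine ⟨θ, ⟨hθ0, lt_of_le_of_lt hθ1 (by norm_num)⟩, fun k hk t => ?_⟩
  have hRHS0 : (0:ℝ) < 2 * k / (Real.exp 1 * β * θ ^ β) := by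
    have hθβpos : (0:ℝ) < θ ^ β := Real.rpow_pos_of_pos hθ0 β
    have hk0 : (0:ℝ) < (k:ℝ) := by exact_mod_cast hk
    positivity
  have hRHSnn : (0:ℝ) ≤ (Nat.factorial k : ℝ) *
      ((2 * k / (Real.exp 1 * β * θ ^ β)) ^ ((k : ℝ) / β)) := by
    apply mul_nonneg (by positivity)
    exact Real.rpow_nonneg hRHS0.le _
  rw [iteratedDeriv_flatFn_eq hβ hθ0 hθ1 hθβ k]
  rcases le_or_gt t 0 with ht | ht
  · have : gj β k t = 0 := by simp [gj, if_neg (not_lt.2 ht)]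
    rw [this, abs_zero]
    exact hRHSnn
  · have h1 : |gj β k t| ≤ ‖iteratedDeriv k (Fc β) (t:ℂ)‖ := by
      rw [gj, if_pos ht]
      exact Complex.abs_re_le_norm _
    have h2 := iteratedDeriv_Fc_bound hβ hθ0 hθ1 hθβ k ht
    have h3 := opt_bound hβ hθ0 hk ht
    calc |gj β k t| ≤ k.factorial * Real.exp (-(t ^ (-β) / 2)) / (θ * t) ^ k :=
          le_trans h1 h2
      _ = k.factorial * (Real.exp (-(t ^ (-β) / 2)) / (θ * t) ^ k) := by ring
      _ ≤ (Nat.factorial k : ℝ) * ((2 * k / (Real.exp 1 * β * θ ^ β)) ^ ((k : ℝ) / β)) := by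
          apply mul_le_mul_of_nonneg_left h3 (by positivity)
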